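/- Let γ > 1, 0 < α < 1/2, ρ̄ > 0 and E > 0. There exists a constant c > 0, depending only on γ, α, ρ̄ and E, with the following property: if ρ : ℝ → ℝ is continuously differentiable, ρ(x) > 0 for all x, ∫_ℝ ρ(x)·Ψ(ρ(x), ρ̄) dx ≤ E and ∫_ℝ ( (ρ^{α−1/2})'(x) )² dx ≤ E, then ρ(x) ≥ c for all x ∈ ℝ. -/

import Mathlib

open Real MeasureTheory Filter

/-- The pressure potential `Ψ(ρ, ρ̄)` for the pressure law `P(ρ) = ρ^γ`. -/
noncomputable def psi (γ ρ ρb : ℝ) : ℝ :=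
  (1 / ((γ - 1) * ρ)) * (ρ ^ γ - ρb ^ γ - γ * ρb ^ (γ - 1) * (ρ - ρb))

/-- Tangent line inequality: `g t ≥ 0`. -/
lemma g_nonneg {γ ρb : ℝ} (hγ : 1 < γ) (hρb : 0 < ρb) {t : ℝ} (ht : 0 ≤ t) :
    0 ≤ t ^ γ - ρb ^ γ - γ * ρb ^ (γ - 1) * (t - ρb) := by
  have hs : (-1 : ℝ) ≤ t / ρb - 1 := by
    have : 0 ≤ t / ρb := div_nonneg ht hρb.le
    linarith
  have h := one_add_mul_self_le_rpow_one_add hs hγ.le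
  have h2 : (1 + (t / ρb - 1)) ^ γ = t ^ γ / ρb ^ γ := by
    rw [show 1 + (t / ρb - 1) = t / ρb by ring, Real.div_rpow ht hρb.le]
  rw [h2] at h
  have hb : (0:ℝ) < ρb ^ γ := Real.rpow_pos_of_pos hρb γ
  have h3 : ρb ^ γ * (1 + γ * (t / ρb - 1)) ≤ t ^ γ := by
    calc ρb ^ γ * (1 + γ * (t / ρb - 1)) ≤ ρb ^ γ * (t ^ γ / ρb ^ γ) := by
          exact mul_le_mul_of_nonneg_left h hb.le
      _ = t ^ γ := by field_simp
  have h4 : ρb ^ (γ - 1) = ρb ^ γ / ρb := by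
    rw [Real.rpow_sub hρb, Real.rpow_one]
  rw [h4]
  have : ρb ^ γ * (1 + γ * (t / ρb - 1)) = ρb ^ γ + γ * (ρb ^ γ / ρb) * (t - ρb) := by
    field_simp
  linarith [h3, this ▸ h3]

/-- Uniform positive lower bound for the density (Lemma 3.2, case `ρ̄ > 0`,
`0 < α < 1/2`). -/
theorem stmt7 (γ α ρb E : ℝ) (hγ : 1 < γ) (hα0 : 0 < α) (hα : α < 1 / 2)
    (hρb : 0 < ρb) (hE : 0 < E) :
    ∃ c > 0, ∀ ρ : ℝ → ℝ, ContDiff ℝ 1 ρ → (∀ x, 0 < ρ x) →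
      Integrable (fun x => ρ x * psi γ (ρ x) ρb) →
      (∫ x, ρ x * psi γ (ρ x) ρb) ≤ E →
      Integrable (fun x => (deriv (fun y => ρ y ^ (α - 1 / 2)) x) ^ 2) →
      (∫ x, (deriv (fun y => ρ y ^ (α - 1 / 2)) x) ^ 2) ≤ E →
      ∀ x, c ≤ ρ x := by
  have hγ1 : (0:ℝ) < γ - 1 := by linarith
  set p : ℝ := α - 1 / 2 with hpdef
  have hpneg : p < 0 := by simp only [hpdef]; linarith
  set g : ℝ → ℝ := fun t => t ^ γ - ρb ^ γ - γ * ρb ^ (γ - 1) * (t - ρb) with hgdef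
  -- g is strictly antitone on Icc 0 ρb
  have hgcont : Continuous g := by
    have : Continuous fun t : ℝ => t ^ γ :=
      continuous_iff_continuousAt.2 fun x =>
        Real.continuousAt_rpow_const x γ (Or.inr (by linarith))
    fun_prop
  have hganti : StrictAntiOn g (Set.Icc 0 ρb) := by
    apply strictAntiOn_of_deriv_neg (convex_Icc 0 ρb) hgcont.continuousOn
    intro t ht
    rw [interior_Icc] at ht
    have ht0 : 0 < t := ht.1
    have hder : HasDerivAt g (γ * t ^ (γ - 1) - γ * ρb ^ (γ - 1)) t := by
      have h1 : HasDerivAt (fun t : ℝ => t ^ γ) (γ * t ^ (γ - 1)) t :=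
        Real.hasDerivAt_rpow_const (Or.inl ht0.ne')
      have h2 : HasDerivAt (fun t : ℝ => γ * ρb ^ (γ - 1) * (t - ρb))
          (γ * ρb ^ (γ - 1)) t := by
        simpa using ((hasDerivAt_id t).sub_const ρb).const_mul (γ * ρb ^ (γ - 1))
      exact (h1.sub_const (ρb ^ γ)).sub h2
    rw [hder.deriv]
    have : t ^ (γ - 1) < ρb ^ (γ - 1) :=
      Real.rpow_lt_rpow ht0.le ht.2 (by linarith)
    have hγ0 : (0:ℝ) < γ := by linarith
    nlinarith
  have hgρb : g ρb = 0 := by simp [hgdef]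
  set m : ℝ := g (ρb / 2) with hmdef
  have hm : 0 < m := by
    have := hganti (show ρb / 2 ∈ Set.Icc 0 ρb from ⟨by linarith, by linarith⟩)
      (show ρb ∈ Set.Icc 0 ρb from ⟨hρb.le, le_rfl⟩) (by linarith)
    rw [hgρb] at this; exact hmdef ▸ this
  have hm2 : ∀ t, 0 < t → t ≤ ρb / 2 → m ≤ g t := by
    intro t ht htle
    rcases eq_or_lt_of_le htle with h | h
    · rw [h]
    · exact (hganti (show t ∈ Set.Icc 0 ρb from ⟨ht.le, by linarith⟩)
        (show ρb / 2 ∈ Set.Icc 0 ρb from ⟨by linarith, by linarith⟩) h).le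
  set m' : ℝ := m / (γ - 1) with hm'def
  have hm' : 0 < m' := div_pos hm hγ1
  set δ : ℝ := E / m' with hδdef
  have hδ : 0 < δ := div_pos hE hm'
  set B : ℝ := E / 2 + δ / 2 with hBdef
  have hB : 0 < B := by positivity
  set M₀ : ℝ := (ρb / 2) ^ p with hM₀def
  have hM₀ : 0 < M₀ := Real.rpow_pos_of_pos (by linarith) p
  set c : ℝ := (M₀ + B) ^ p⁻¹ with hcdef
  have hMB : 0 < M₀ + B := by linarith
  have hc : 0 < c := Real.rpow_pos_of_pos hMB _
  have hcp : c ^ p = M₀ + B := by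
    rw [hcdef, ← Real.rpow_mul hMB.le, inv_mul_cancel₀ hpneg.ne, Real.rpow_one]
  refine ⟨c, hc, ?_⟩
  intro ρ hρC1 hpos hInt1 hIle1 hInt2 hIle2 x₀
  by_contra hlt
  push_neg at hlt
  -- rewrite the energy integrand
  have hrw : ∀ x, ρ x * psi γ (ρ x) ρb = g (ρ x) / (γ - 1) := by
    intro x
    have hρx := (hpos x).ne'
    rw [psi, hgdef]
    field_simp
  have hnonneg : ∀ x, 0 ≤ ρ x * psi γ (ρ x) ρb := by
    intro x
    rw [hrw x]
    exact div_nonneg (g_nonneg hγ hρb (hpos x).le) hγ1.le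
  -- derivative of u = ρ ^ p
  set u : ℝ → ℝ := fun y => ρ y ^ p with hudef
  set v : ℝ → ℝ := fun y => p * ρ y ^ (p - 1) * deriv ρ y with hvdef
  have hu_deriv : ∀ y, HasDerivAt u (v y) y := by
    intro y
    have h1 : HasDerivAt (fun t : ℝ => t ^ p) (p * ρ y ^ (p - 1)) (ρ y) :=
      Real.hasDerivAt_rpow_const (Or.inl (hpos y).ne')
    have h2 : HasDerivAt ρ (deriv ρ y) y :=
      (hρC1.differentiable one_ne_zero y).hasDerivAt
    have h3 := h1.comp y h2
    rw [show v y = p * ρ y ^ (p - 1) * deriv ρ y from rfl]; exact h3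
  have hderiv_eq : deriv u = v := funext fun y => (hu_deriv y).deriv
  have hvcont : Continuous v := by
    have h1 : Continuous (deriv ρ) := hρC1.continuous_deriv le_rfl
    have h2 : Continuous fun y => ρ y ^ (p - 1) :=
      (hρC1.continuous).rpow_const fun y => Or.inl (hpos y).ne'
    fun_prop
  -- key integral bound
  have key : ∀ a b : ℝ, a ≤ b → b - a ≤ δ → |∫ t in a..b, deriv u t| ≤ B := by
    intro a b hab hba
    rw [hderiv_eq]
    have hvi : IntervalIntegrable v volume a b := hvcont.intervalIntegrable a b
    calc |∫ t in a..b, v t| ≤ ∫ t in a..b, |v t| :=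
          intervalIntegral.abs_integral_le_integral_abs hab
      _ ≤ ∫ t in a..b, ((v t) ^ 2 + 1) / 2 := by
          apply intervalIntegral.integral_mono_on hab
            (hvcont.abs.intervalIntegrable a b)
            (((hvcont.pow 2).add continuous_const).div_const 2 |>.intervalIntegrable a b)
          intro t _
          show |v t| ≤ ((v t) ^ 2 + 1) / 2
          nlinarith [sq_nonneg (|v t| - 1), sq_abs (v t)]
      _ = (∫ t in a..b, (v t) ^ 2) / 2 + (b - a) / 2 := by
          rw [intervalIntegral.integral_div, intervalIntegral.integral_add (f := fun t => v t ^ 2) (g := fun _ => 1)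
            ((hvcont.pow 2).intervalIntegrable a b)
            (continuous_const.intervalIntegrable a b)]
          simp [add_div]
      _ ≤ E / 2 + δ / 2 := by
          have h1 : (∫ t in a..b, (v t) ^ 2) ≤ E := by
            rw [intervalIntegral.integral_of_le hab]
            calc (∫ t in Set.Ioc a b, (v t) ^ 2) ≤ ∫ t, (deriv u t) ^ 2 := by
                  rw [hderiv_eq]
                  exact setIntegral_le_integral (hderiv_eq ▸ hInt2)
                    (Eventually.of_forall fun t => sq_nonneg _)
              _ ≤ E := hIle2
          linarith
  have hx0 : M₀ + B < u x₀ := by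
    rw [← hcp]
    exact Real.rpow_lt_rpow_of_neg (hpos x₀) hlt hpneg
  -- on [x₀ - δ, x₀ + δ], ρ < ρb/2
  have hsmall : ∀ x, |x - x₀| ≤ δ → ρ x ≤ ρb / 2 := by
    intro x hx
    have hux : M₀ < u x := by
      have hFTC : ∀ a b : ℝ, (∫ t in a..b, deriv u t) = u b - u a := by
        intro a b
        apply intervalIntegral.integral_deriv_eq_sub
          (fun y _ => (hu_deriv y).differentiableAt)
        rw [hderiv_eq]; exact hvcont.intervalIntegrable a b
      rcases le_total x₀ x with h | h
      · have := key x₀ x h (by rw [abs_le] at hx; linarith)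
        rw [hFTC x₀ x] at this
        rw [abs_le] at this
        linarith
      · have := key x x₀ h (by rw [abs_le] at hx; linarith)
        rw [hFTC x x₀] at this
        rw [abs_le] at this
        linarith
    by_contra h
    push_neg at h
    have : u x ≤ M₀ :=
      Real.rpow_le_rpow_of_nonpos (by linarith) h.le hpneg.le
    linarith
  -- lower bound for the energy integral
  have hIoc : ∀ x ∈ Set.Ioc (x₀ - δ) (x₀ + δ), m' ≤ ρ x * psi γ (ρ x) ρb := by
    intro x hx
    rw [hrw x, hm'def]
    have hgx : m ≤ g (ρ x) := hm2 (ρ x) (hpos x)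
      (hsmall x (abs_le.2 ⟨by linarith [hx.1], by linarith [hx.2]⟩))
    gcongr
  have hvol : (volume (Set.Ioc (x₀ - δ) (x₀ + δ))).toReal = 2 * δ := by
    rw [Real.volume_Ioc, ENNReal.toReal_ofReal (by linarith)]
    ring
  have h1 : m' * (2 * δ) ≤ ∫ x in Set.Ioc (x₀ - δ) (x₀ + δ), ρ x * psi γ (ρ x) ρb := by
    have := setIntegral_ge_of_const_le measurableSet_Ioc measure_Ioc_lt_top.ne hIoc
      hInt1.integrableOn
    rwa [measureReal_def, hvol, smul_eq_mul, mul_comm] at this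
  have h2 : (∫ x in Set.Ioc (x₀ - δ) (x₀ + δ), ρ x * psi γ (ρ x) ρb)
      ≤ ∫ x, ρ x * psi γ (ρ x) ρb :=
    setIntegral_le_integral hInt1 (Eventually.of_forall hnonneg)
  have h3 : m' * (2 * δ) = 2 * E := by
    rw [hδdef]
    field_simp
  linarith
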